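/- Let k be a field of characteristic p > 0 that is F-finite (the Frobenius map makes k a finite module over itself), let 𝒰 be a non-principal ultrafilter on ℕ, and let k* be the ultrapower of k. Then for every e ≥ 0 the relative Frobenius map F^e_* k ⊗_k k* → F^e_*(k*) is an isomorphism; in particular, k* is an F-finite field. -/

import Mathlib

open Filter

/-- `FrobTwist p e A` is `A` regarded as an algebra over its base via the `e`-th power of
the Frobenius; this is the pushforward `F^e_* A`. -/
def FrobTwist (p e : ℕ) (A : Type*) : Type _ := A

/-- The identity map `A → FrobTwist p e A`. -/
def FrobTwist.of {A : Type*} (p e : ℕ) : A → FrobTwist p e A := id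

/-- The identity map `FrobTwist p e A → A`. -/
def FrobTwist.down {A : Type*} (p e : ℕ) : FrobTwist p e A → A := id

instance {A : Type*} [CommRing A] (p e : ℕ) : CommRing (FrobTwist p e A) :=
  inferInstanceAs (CommRing A)

/-- The twisted algebra structure of `F^e_* A` over `k`: a scalar `a ∈ k` acts through
`a ↦ a^{p^e}`. -/
noncomputable instance FrobTwist.algebra (k A : Type*) [CommRing k] [CommRing A]
    [Algebra k A] (p e : ℕ) [ExpChar k p] : Algebra k (FrobTwist p e A) :=
  ((algebraMap k A).comp (iterateFrobenius k p e)).toAlgebra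

/-- The ultrapower `k*` is an algebra over `k` via constant sequences. -/
noncomputable instance germAlgebra (k : Type*) [CommRing k] (l : Filter ℕ) :
    Algebra k (l.Germ k) :=
  ((Filter.Germ.coeRingHom l).comp (Pi.constRingHom ℕ k)).toAlgebra

instance germCharP (k : Type*) [CommRing k] (l : Filter ℕ) [l.NeBot] (p : ℕ) [CharP k p] :
    CharP (l.Germ k) p :=
  charP_of_injective_ringHom
    (f := (Filter.Germ.coeRingHom l).comp (Pi.constRingHom ℕ k))
    (fun a b h => Filter.Germ.const_inj.mp h) p

instance germExpChar (k : Type*) [CommRing k] (l : Filter ℕ) [l.NeBot] (p : ℕ) [CharP k p]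
    [Fact p.Prime] : ExpChar (l.Germ k) p := .prime Fact.out

open TensorProduct in
/-- The relative Frobenius `F^e_* k ⊗_k k* → F^e_*(k*)`,
sending `x ⊗ α` to `x·α^{p^e}` (computed in `k*`). -/
noncomputable def relativeFrobenius (𝒰 : Ultrafilter ℕ) (k : Type*) [Field k] (p : ℕ)
    [Fact p.Prime] [CharP k p] (e : ℕ) :
    (FrobTwist p e k) ⊗[k] ((𝒰 : Filter ℕ).Germ k) →ₗ[k]
      FrobTwist p e ((𝒰 : Filter ℕ).Germ k) :=
  TensorProduct.lift <| LinearMap.mk₂ k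
    (fun x α => FrobTwist.of p e ((algebraMap k ((𝒰 : Filter ℕ).Germ k) x) * α ^ p ^ e))
    (fun x y α => by
      show (algebraMap k ((𝒰 : Filter ℕ).Germ k) (FrobTwist.down p e x + FrobTwist.down p e y)) *
          α ^ p ^ e = _ + _
      rw [map_add, add_mul]; rfl)
    (fun a x α => by
      show (algebraMap k ((𝒰 : Filter ℕ).Germ k))
          ((iterateFrobenius k p e a) * FrobTwist.down p e x) * α ^ p ^ e
        = (algebraMap k ((𝒰 : Filter ℕ).Germ k)) (iterateFrobenius k p e a) *
          ((algebraMap k ((𝒰 : Filter ℕ).Germ k)) x * α ^ p ^ e)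
      rw [map_mul, mul_assoc]; rfl)
    (fun x α β => by
      show (algebraMap k ((𝒰 : Filter ℕ).Germ k) x) * (α + β) ^ p ^ e = _ + _
      rw [add_pow_char_pow, mul_add]; rfl)
    (fun a x α => by
      show (algebraMap k ((𝒰 : Filter ℕ).Germ k) x) * (a • α) ^ p ^ e
        = (a • FrobTwist.of p e ((algebraMap k ((𝒰 : Filter ℕ).Germ k) x) * α ^ p ^ e) :
            FrobTwist p e ((𝒰 : Filter ℕ).Germ k))
      show (algebraMap k ((𝒰 : Filter ℕ).Germ k) x) *
          ((algebraMap k ((𝒰 : Filter ℕ).Germ k) a) * α) ^ p ^ e =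
        (algebraMap k ((𝒰 : Filter ℕ).Germ k)) (iterateFrobenius k p e a) *
          ((algebraMap k ((𝒰 : Filter ℕ).Germ k) x) * α ^ p ^ e)
      rw [mul_pow, iterateFrobenius_def, map_pow]
      ring)

section Aux

variable {k : Type*} [Field k] (p : ℕ) [Fact p.Prime] [CharP k p]

/-- Concrete statement that `b` is a basis of `F^e_* k` over `k`:
spanning and independence of `p^e`-th power combinations. -/
def PBasis (e : ℕ) {ι : Type} [Fintype ι] (b : ι → k) : Prop :=
  (∀ x : k, ∃ c : ι → k, x = ∑ i, c i ^ p ^ e * b i) ∧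
  (∀ c : ι → k, ∑ i, c i ^ p ^ e * b i = 0 → ∀ i, c i = 0)

lemma frob_smul' {R A : Type*} [CommRing R] [CommRing A] [Algebra R A] (p e : ℕ)
    [ExpChar R p] (a : R) (x : A) :
    a • (FrobTwist.of p e x) = FrobTwist.of p e (algebraMap R A (a ^ p ^ e) * x) := by
  show ((algebraMap R A).comp (iterateFrobenius R p e)) a * x = _
  rw [RingHom.comp_apply, iterateFrobenius_def]; rfl

lemma frob_smul (e : ℕ) (a x : k) :
    a • (FrobTwist.of p e x) = FrobTwist.of p e (a ^ p ^ e * x) := by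
  rw [frob_smul' p e a x, Algebra.algebraMap_self_apply]

lemma pbasis_one (hFfin : Module.Finite k (FrobTwist p 1 k)) :
    ∃ (ι : Type) (_ : Fintype ι) (b : ι → k), PBasis p 1 b := by
  let B := Module.finBasis k (FrobTwist p 1 k)
  refine ⟨Fin (Module.finrank k (FrobTwist p 1 k)), inferInstance,
    fun i => FrobTwist.down p 1 (B i), ?_, ?_⟩
  · intro x
    refine ⟨fun i => B.repr (FrobTwist.of p 1 x) i, ?_⟩
    have h := B.sum_repr (FrobTwist.of p 1 x)
    have h2 : ∑ i, B.repr (FrobTwist.of p 1 x) i • B i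
        = FrobTwist.of p 1 (∑ i, (B.repr (FrobTwist.of p 1 x) i) ^ p ^ 1 *
            FrobTwist.down p 1 (B i)) := by
      rw [show FrobTwist.of p 1 (∑ i, (B.repr (FrobTwist.of p 1 x) i) ^ p ^ 1 *
            FrobTwist.down p 1 (B i))
          = ∑ i, FrobTwist.of p 1 ((B.repr (FrobTwist.of p 1 x) i) ^ p ^ 1 *
            FrobTwist.down p 1 (B i)) from rfl]
      exact Finset.sum_congr rfl fun i _ => frob_smul p 1 _ _
    rw [h2] at h
    exact (congrArg (FrobTwist.down p 1) h).symm
  · intro c hc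
    have h : ∑ i, c i • B i = 0 := by
      have : ∑ i, c i • B i = FrobTwist.of p 1 (∑ i, c i ^ p ^ 1 * FrobTwist.down p 1 (B i)) :=
        Finset.sum_congr rfl fun i _ => frob_smul p 1 _ _
      rw [this, hc]; rfl
    exact Fintype.linearIndependent_iff.mp B.linearIndependent c h

lemma pbasis_succ {e : ℕ} {ι κ : Type} [Fintype ι] [Fintype κ] {b : ι → k} {b' : κ → k}
    (hb : PBasis p e b) (hb' : PBasis p 1 b') :
    PBasis p (e + 1) (fun ij : ι × κ => b' ij.2 ^ p ^ e * b ij.1) := by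
  have key : ∀ d : ι → κ → k, ∀ i : ι,
      (∑ j, d i j ^ p ^ 1 * b' j) ^ p ^ e * b i
        = ∑ j, d i j ^ p ^ (e + 1) * (b' j ^ p ^ e * b i) := by
    intro d i
    rw [sum_pow_char_pow, Finset.sum_mul]
    refine Finset.sum_congr rfl fun j _ => ?_
    rw [mul_pow, ← pow_mul, pow_one, ← pow_succ', mul_assoc]
  constructor
  · intro x
    obtain ⟨c, hc⟩ := hb.1 x
    choose d hd using fun i => hb'.1 (c i)
    refine ⟨fun ij => d ij.1 ij.2, ?_⟩
    rw [hc, Fintype.sum_prod_type]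
    refine Finset.sum_congr rfl fun i _ => ?_
    rw [hd i]
    exact key d i
  · intro c hc ij
    rw [Fintype.sum_prod_type] at hc
    have h1 : ∑ i, (∑ j, c (i, j) ^ p ^ 1 * b' j) ^ p ^ e * b i = 0 := by
      rw [← hc]
      exact Finset.sum_congr rfl fun i _ => key (fun i j => c (i, j)) i
    exact hb'.2 _ (hb.2 _ h1 ij.1) ij.2

lemma exists_pbasis (hFfin : Module.Finite k (FrobTwist p 1 k)) (e : ℕ) :
    ∃ (ι : Type) (_ : Fintype ι) (b : ι → k), PBasis p e b := by
  induction e with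
  | zero =>
    refine ⟨PUnit, inferInstance, fun _ => 1, fun x => ⟨fun _ => x, ?_⟩, fun c hc i => ?_⟩
    · simp
    · simpa using hc
  | succ e ih =>
    obtain ⟨ι, _, b, hb⟩ := ih
    obtain ⟨κ, _, b', hb'⟩ := pbasis_one p hFfin
    exact ⟨ι × κ, inferInstance, _, pbasis_succ p hb hb'⟩

end Aux
lemma germ_combination {k : Type*} [Field k] (p : ℕ) [Fact p.Prime] [CharP k p]
    (l : Filter ℕ) {ι : Type} [Fintype ι] (b : ι → k) (g : ι → ℕ → k) (e : ℕ) :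
    ∑ i, (algebraMap k (l.Germ k) (b i)) * (↑(g i) : l.Germ k) ^ p ^ e
      = (↑(fun n => ∑ i, b i * g i n ^ p ^ e) : l.Germ k) := by
  rw [show ((fun n => ∑ i, b i * g i n ^ p ^ e) : ℕ → k)
      = ∑ i, ((fun n => b i * g i n ^ p ^ e) : ℕ → k) from funext fun n => by simp]
  refine Eq.symm ((map_sum (Filter.Germ.coeRingHom l)
      (fun i => ((fun n => b i * g i n ^ p ^ e) : ℕ → k)) Finset.univ).trans ?_)
  refine Finset.sum_congr rfl fun i _ => ?_
  rw [← Filter.Germ.coe_pow]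
  exact Filter.Germ.coe_mul (fun _ => b i) ((g i) ^ (p ^ e))

open TensorProduct in
/-- If `k` is an `F`-finite field of characteristic `p > 0` and `𝒰` is a non-principal
ultrafilter on `ℕ`, then for every `e ≥ 0` the relative Frobenius
`F^e_* k ⊗_k k* → F^e_*(k*)` is an isomorphism; in particular the ultrapower `k*` is
again `F`-finite. -/
theorem relativeFrobenius_bijective (𝒰 : Ultrafilter ℕ)
    (h𝒰 : ∀ A : Set ℕ, A.Finite → A ∉ 𝒰) (k : Type*) [Field k] (p : ℕ)
    [Fact p.Prime] [CharP k p] (hFfin : Module.Finite k (FrobTwist p 1 k)) :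
    (∀ e : ℕ, Function.Bijective (relativeFrobenius 𝒰 k p e)) ∧
      Module.Finite ((𝒰 : Filter ℕ).Germ k)
        (FrobTwist p 1 ((𝒰 : Filter ℕ).Germ k)) := by
  classical
  have Φtmul : ∀ (e : ℕ) (x : k) (β : (𝒰 : Filter ℕ).Germ k),
      relativeFrobenius 𝒰 k p e (FrobTwist.of p e x ⊗ₜ[k] β)
        = FrobTwist.of p e (algebraMap k ((𝒰 : Filter ℕ).Germ k) x * β ^ p ^ e) :=
    fun e x β => rfl
  constructor
  · intro e
    obtain ⟨ι, _, b, hb⟩ := exists_pbasis p hFfin e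
    constructor
    · -- injectivity
      rw [injective_iff_map_eq_zero]
      have decomp : ∀ s : (FrobTwist p e k) ⊗[k] ((𝒰 : Filter ℕ).Germ k),
          ∃ α : ι → (𝒰 : Filter ℕ).Germ k,
            s = ∑ i, FrobTwist.of p e (b i) ⊗ₜ[k] α i := by
        intro s
        induction s using TensorProduct.induction_on with
        | zero => exact ⟨0, by simp⟩
        | tmul x β =>
          obtain ⟨c, hc⟩ := hb.1 (FrobTwist.down p e x)
          refine ⟨fun i => c i • β, ?_⟩
          have hx : x = ∑ i, c i • FrobTwist.of p e (b i) := by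
            have h2 : ∑ i, c i • FrobTwist.of p e (b i)
                = FrobTwist.of p e (∑ i, c i ^ p ^ e * b i) :=
              Finset.sum_congr rfl fun i _ => frob_smul p e _ _
            rw [h2, ← hc]; rfl
          rw [hx, TensorProduct.sum_tmul]
          exact Finset.sum_congr rfl fun i _ => (TensorProduct.smul_tmul (c i) _ β)
        | add u v hu hv =>
          obtain ⟨αu, hαu⟩ := hu
          obtain ⟨αv, hαv⟩ := hv
          refine ⟨αu + αv, ?_⟩
          rw [hαu, hαv, ← Finset.sum_add_distrib]
          exact Finset.sum_congr rfl fun i _ => (TensorProduct.tmul_add _ _ _).symm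
      intro t ht
      obtain ⟨α, rfl⟩ := decomp t
      have ht' : ∑ i, (algebraMap k ((𝒰 : Filter ℕ).Germ k) (b i) * α i ^ p ^ e) = 0 := by
        have h3 : (∑ i, FrobTwist.of p e
            (algebraMap k ((𝒰 : Filter ℕ).Germ k) (b i) * α i ^ p ^ e)
              : FrobTwist p e ((𝒰 : Filter ℕ).Germ k)) = 0 := by
          rw [← ht, map_sum]
          exact (Finset.sum_congr rfl fun i _ => (Φtmul e _ _).symm).symm
        exact h3
      have hrep : ∀ i, ∃ g : ℕ → k, (↑g : (𝒰 : Filter ℕ).Germ k) = α i :=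
        fun i => (α i).inductionOn fun g₀ => ⟨g₀, rfl⟩
      choose g hg using hrep
      have hsum : (↑(fun n => ∑ i, b i * g i n ^ p ^ e) : (𝒰 : Filter ℕ).Germ k) = 0 := by
        rw [← germ_combination p (𝒰 : Filter ℕ) b g e, ← ht']
        exact Finset.sum_congr rfl fun i _ => by rw [hg i]
      have hev : ∀ᶠ n in (𝒰 : Filter ℕ), ∑ i, b i * g i n ^ p ^ e = 0 :=
        Filter.Germ.coe_eq.mp hsum
      have hα : ∀ i, α i = 0 := by
        intro i
        rw [← hg i]
        refine Filter.Germ.coe_eq.mpr (hev.mono fun n hn => ?_)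
        refine hb.2 (fun j => g j n) ?_ i
        rw [← hn]
        exact Finset.sum_congr rfl fun j _ => mul_comm _ _
      simp [hα]
    · -- surjectivity
      intro γ
      obtain ⟨f, hf⟩ : ∃ f : ℕ → k, (↑f : (𝒰 : Filter ℕ).Germ k) = FrobTwist.down p e γ :=
        (FrobTwist.down p e γ).inductionOn fun f₀ => ⟨f₀, rfl⟩
      choose c hc using fun n => hb.1 (f n)
      refine ⟨∑ i, FrobTwist.of p e (b i) ⊗ₜ[k] (↑(fun n => c n i) : (𝒰 : Filter ℕ).Germ k), ?_⟩
      rw [map_sum]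
      have h4 : (∑ i, FrobTwist.of p e (algebraMap k ((𝒰 : Filter ℕ).Germ k) (b i) *
            (↑(fun n => c n i) : (𝒰 : Filter ℕ).Germ k) ^ p ^ e)
          : FrobTwist p e ((𝒰 : Filter ℕ).Germ k)) = γ := by
        show (∑ i, algebraMap k ((𝒰 : Filter ℕ).Germ k) (b i) *
            (↑(fun n => c n i) : (𝒰 : Filter ℕ).Germ k) ^ p ^ e) = FrobTwist.down p e γ
        rw [germ_combination p (𝒰 : Filter ℕ) b (fun i n => c n i) e, ← hf]
        refine Filter.Germ.coe_eq.mpr (Filter.Eventually.of_forall fun n => ?_)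
        rw [hc n]
        exact Finset.sum_congr rfl fun i _ => mul_comm _ _
      rw [← h4]
      exact Finset.sum_congr rfl fun i _ => Φtmul e _ _
  · -- F-finiteness of the ultrapower
    obtain ⟨ι, _, b, hb⟩ := pbasis_one p hFfin
    refine Module.Finite.of_fg_top (Submodule.fg_def.mpr
      ⟨Set.range (fun i : ι => FrobTwist.of p 1
          (algebraMap k ((𝒰 : Filter ℕ).Germ k) (b i))), Set.finite_range _, ?_⟩)
    rw [eq_top_iff]
    rintro γ -
    rw [Submodule.mem_span_range_iff_exists_fun]
    obtain ⟨f, hf⟩ : ∃ f : ℕ → k, (↑f : (𝒰 : Filter ℕ).Germ k) = FrobTwist.down p 1 γ :=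
      (FrobTwist.down p 1 γ).inductionOn fun f₀ => ⟨f₀, rfl⟩
    choose c hc using fun n => hb.1 (f n)
    refine ⟨fun i => (↑(fun n => c n i) : (𝒰 : Filter ℕ).Germ k), ?_⟩
    have h5 : ∑ i, (↑(fun n => c n i) : (𝒰 : Filter ℕ).Germ k) •
        FrobTwist.of p 1 (algebraMap k ((𝒰 : Filter ℕ).Germ k) (b i))
        = FrobTwist.of p 1 (∑ i, algebraMap k ((𝒰 : Filter ℕ).Germ k) (b i) *
            (↑(fun n => c n i) : (𝒰 : Filter ℕ).Germ k) ^ p ^ 1) := by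
      refine Finset.sum_congr rfl fun i _ => ?_
      rw [frob_smul' p 1, Algebra.algebraMap_self_apply, mul_comm]; rfl
    rw [h5]
    show (∑ i, algebraMap k ((𝒰 : Filter ℕ).Germ k) (b i) *
        (↑(fun n => c n i) : (𝒰 : Filter ℕ).Germ k) ^ p ^ 1) = FrobTwist.down p 1 γ
    rw [germ_combination p (𝒰 : Filter ℕ) b (fun i n => c n i) 1, ← hf]
    refine Filter.Germ.coe_eq.mpr (Filter.Eventually.of_forall fun n => ?_)
    rw [hc n]
    exact Finset.sum_congr rfl fun i _ => mul_comm _ _
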